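/- Let G be a connected 4-regular graph on n vertices with diameter 2 such that every vertex in the second distance set N_2(v) of any vertex v has at least two neighbors in N_1(v). Then n ≤ 11. -/
import Mathlib

open Finset

/-- Let `G` be a connected `4`-regular graph on `n` vertices with
diameter `2` such that for every vertex `v`, every vertex `x` at distance `2` from
`v` has at least two neighbors among the neighbors of `v`.  Then `n ≤ 11`. -/
theorem stmt_5 {n : ℕ} (G : SimpleGraph (Fin n)) [DecidableRel G.Adj]
    (hconn : G.Connected) (hreg : G.IsRegularOfDegree 4)
    (hdiam : (∀ u w : Fin n, G.dist u w ≤ 2) ∧ ∃ u w : Fin n, G.dist u w = 2)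
    (hpred : ∀ v x : Fin n, G.dist v x = 2 →
      2 ≤ ((G.neighborFinset x) ∩ (G.neighborFinset v)).card) :
    n ≤ 11 := by
  obtain ⟨v, w, hvw⟩ := hdiam.2
  have hd := hdiam.1
  set N2 : Finset (Fin n) := univ.filter (fun x => G.dist v x = 2) with hN2def
  -- double counting: 2 * |N2| ≤ 12, so |N2| ≤ 6
  have hcount : 2 * N2.card ≤ 12 := by
    calc 2 * N2.card = ∑ _x ∈ N2, 2 := by rw [Finset.sum_const, smul_eq_mul, mul_comm]
    _ ≤ ∑ x ∈ N2, ((G.neighborFinset x) ∩ (G.neighborFinset v)).card := by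
        apply Finset.sum_le_sum
        intro x hx
        exact hpred v x (by simpa [hN2def] using hx)
    _ = ∑ x ∈ N2, ∑ u ∈ G.neighborFinset v, (if G.Adj x u then 1 else 0) := by
        apply Finset.sum_congr rfl
        intro x _
        rw [← Finset.sum_filter]
        simp only [Finset.sum_const, smul_eq_mul, mul_one]
        congr 1
        ext u
        simp [Finset.mem_inter, Finset.mem_filter, SimpleGraph.mem_neighborFinset,
          and_comm]
    _ = ∑ u ∈ G.neighborFinset v, ∑ x ∈ N2, (if G.Adj x u then 1 else 0) :=
        Finset.sum_comm
    _ = ∑ u ∈ G.neighborFinset v, (N2.filter (fun x => G.Adj x u)).card := by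
        apply Finset.sum_congr rfl
        intro u _
        rw [← Finset.sum_filter]
        simp
    _ ≤ ∑ _u ∈ G.neighborFinset v, 3 := by
        apply Finset.sum_le_sum
        intro u hu
        have hsub : N2.filter (fun x => G.Adj x u) ⊆ (G.neighborFinset u).erase v := by
          intro x hx
          rw [Finset.mem_filter] at hx
          rw [Finset.mem_erase, SimpleGraph.mem_neighborFinset]
          refine ⟨fun h => ?_, hx.2.symm⟩
          have hx1 : G.dist v x = 2 := by simpa [hN2def] using hx.1
          rw [h] at hx1
          have h0 : G.dist v v = 0 := hconn.dist_eq_zero_iff.mpr rfl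
          omega
        calc (N2.filter (fun x => G.Adj x u)).card ≤ ((G.neighborFinset u).erase v).card :=
              Finset.card_le_card hsub
        _ ≤ 3 := by
            have hv : v ∈ G.neighborFinset u := by
              rw [SimpleGraph.mem_neighborFinset]
              exact (SimpleGraph.mem_neighborFinset G v u).mp hu |>.symm
            rw [Finset.card_erase_of_mem hv]
            have := hreg u
            rw [SimpleGraph.degree] at this
            omega
    _ = 12 := by
        rw [Finset.sum_const, smul_eq_mul]
        have := hreg v
        rw [SimpleGraph.degree] at this
        rw [this]
  have hN2 : N2.card ≤ 6 := by omega
  have hcover : (univ : Finset (Fin n)) ⊆ {v} ∪ G.neighborFinset v ∪ N2 := by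
    intro x _
    have h2 : G.dist v x ≤ 2 := hd v x
    interval_cases h : G.dist v x
    · have : v = x := hconn.dist_eq_zero_iff.mp h
      simp [this.symm]
    · have : G.Adj v x := SimpleGraph.dist_eq_one_iff_adj.mp h
      simp [this]
    · simp [hN2def, h]
  have := Finset.card_le_card hcover
  have h1 : ({v} ∪ G.neighborFinset v ∪ N2).card ≤
      1 + (G.neighborFinset v).card + N2.card := by
    calc ({v} ∪ G.neighborFinset v ∪ N2).card
        ≤ ({v} ∪ G.neighborFinset v).card + N2.card := Finset.card_union_le _ _
      _ ≤ ({v} : Finset (Fin n)).card + (G.neighborFinset v).card + N2.card := by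
          have := Finset.card_union_le ({v} : Finset (Fin n)) (G.neighborFinset v)
          omega
      _ = 1 + (G.neighborFinset v).card + N2.card := by simp
  have hdeg := hreg v
  rw [SimpleGraph.degree] at hdeg
  simp only [Finset.card_univ, Fintype.card_fin] at this
  omega
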